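/- arXiv:2605.24244 — 2 statements merged into one kernel-verified Lean document; each statement's English description precedes it below -/
import Mathlib

section
/- For any finite set of n distinct real vectors x_1,...,x_n in R^k and arbitrary scalar targets y_1,...,y_n in R, there exists a two-layer ReLU network with at most n hidden units that exactly interpolates all targets, i.e., f(x_i) = y_i for all i. -/
-- Step 1: separating direction
lemma exists_sep (k : ℕ) (s : Finset (Fin k → ℝ)) (hs : (0 : Fin k → ℝ) ∉ s) :
    ∃ v : Fin k → ℝ, ∀ d ∈ s, (∑ l, v l * d l) ≠ 0 := by
  set P : MvPolynomial (Fin k) ℝ :=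
    ∏ d ∈ s, ∑ l, MvPolynomial.C (d l) * MvPolynomial.X l with hP
  have hPne : P ≠ 0 := by
    rw [hP, Finset.prod_ne_zero_iff]
    intro d hd h0
    have hd0 : d ≠ 0 := fun h => hs (h ▸ hd)
    have : (MvPolynomial.eval d) (∑ l, MvPolynomial.C (d l) * MvPolynomial.X l) = 0 := by
      rw [h0]; simp
    simp only [map_sum, map_mul, MvPolynomial.eval_C, MvPolynomial.eval_X] at this
    have : ∑ l, d l * d l = 0 := this
    have hpos : ∀ l ∈ Finset.univ, 0 ≤ d l * d l := fun l _ => mul_self_nonneg _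
    have := (Finset.sum_eq_zero_iff_of_nonneg hpos).mp this
    apply hd0
    funext l
    have := this l (Finset.mem_univ l)
    exact mul_self_eq_zero.mp this
  by_contra hcon
  push_neg at hcon
  apply hPne
  apply MvPolynomial.funext (q := 0)
  intro v
  obtain ⟨d, hd, hd0⟩ := hcon v
  rw [hP, map_prod, map_zero]
  apply Finset.prod_eq_zero hd
  simp only [map_sum, map_mul, MvPolynomial.eval_C, MvPolynomial.eval_X]
  rw [show ∑ l, d l * v l = ∑ l, v l * d l from Finset.sum_congr rfl fun l _ => mul_comm _ _]
  exact hd0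

-- Step 2: 1-D interpolation
lemma relu1d (y : ℝ → ℝ) (s : Finset ℝ) :
    ∃ m : ℕ, m ≤ s.card ∧ ∃ (a b : Fin m → ℝ) (c : ℝ),
      ∀ t ∈ s, (∑ j, a j * max 0 (t + b j)) + c = y t := by
  induction s using Finset.induction_on_max with
  | empty => exact ⟨0, le_refl 0, Fin.elim0, Fin.elim0, 0, fun t ht => absurd ht (Finset.notMem_empty t)⟩
  | insert p s hp ih =>
    rcases s.eq_empty_or_nonempty with rfl | hs
    · refine ⟨0, by simp, Fin.elim0, Fin.elim0, y p, ?_⟩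
      intro t ht
      simp only [Finset.mem_insert, Finset.notMem_empty, or_false] at ht
      subst ht; simp
    · obtain ⟨m, hm, a, b, c, h⟩ := ih
      set θ := s.max' hs with hθ
      have hθp : θ < p := hp θ (s.max'_mem hs)
      set α := (y p - ((∑ j, a j * max 0 (p + b j)) + c)) / (p - θ) with hα
      have hpne : p ∉ s := fun hmem => absurd (hp p hmem) (lt_irrefl p)
      refine ⟨m + 1, ?_, Fin.snoc a α, Fin.snoc b (-θ), c, ?_⟩
      · rw [Finset.card_insert_of_notMem hpne]; omega
      · intro t ht
        rw [Fin.sum_univ_castSucc]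
        simp only [Fin.snoc_castSucc, Fin.snoc_last]
        rcases Finset.mem_insert.mp ht with rfl | hts
        · have h1 : max 0 (t + -θ) = t - θ := by
            rw [max_eq_right] <;> linarith
          rw [h1, hα]
          have : t - θ ≠ 0 := by linarith
          field_simp
          ring
        · have h1 : max 0 (t + -θ) = 0 := by
            rw [max_eq_left]
            have : t ≤ θ := s.le_max' t hts
            linarith
          rw [h1, mul_zero, add_zero]
          exact h t hts

/-- Two-layer ReLU networks with at most `n` hidden units can interpolate
arbitrary scalar targets at `n` distinct points in `ℝ^k`. -/
theorem two_layer_relu_interpolation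
    (k n : ℕ) (x : Fin n → (Fin k → ℝ)) (hx : Function.Injective x)
    (y : Fin n → ℝ) :
    ∃ (m : ℕ), m ≤ n ∧
      ∃ (a : Fin m → ℝ) (w : Fin m → (Fin k → ℝ)) (b : Fin m → ℝ) (c : ℝ),
        ∀ i : Fin n,
          (∑ j : Fin m, a j * max 0 ((∑ l : Fin k, w j l * x i l) + b j)) + c
            = y i := by
  cases isEmpty_or_nonempty (Fin n) with
  | inl he =>
    exact ⟨0, Nat.zero_le n, Fin.elim0, Fin.elim0, Fin.elim0, 0, fun i => he.elim i⟩
  | inr hne =>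
    -- separating direction
    set D : Finset (Fin k → ℝ) :=
      (Finset.univ.image fun p : Fin n × Fin n => x p.1 - x p.2).erase 0 with hD
    have hD0 : (0 : Fin k → ℝ) ∉ D := Finset.notMem_erase _ _
    obtain ⟨v, hv⟩ := exists_sep k D hD0
    set t : Fin n → ℝ := fun i => ∑ l, v l * x i l with htdef
    have ht : Function.Injective t := by
      intro i j hij
      by_contra hne2
      have hxne : x i ≠ x j := fun h => hne2 (hx h)
      have hmem : x i - x j ∈ D := by
        rw [hD]
        apply Finset.mem_erase.mpr
        refine ⟨sub_ne_zero.mpr hxne, ?_⟩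
        exact Finset.mem_image.mpr ⟨(i, j), Finset.mem_univ _, rfl⟩
      have := hv _ hmem
      apply this
      have : ∑ l, v l * (x i - x j) l = ∑ l, v l * x i l - ∑ l, v l * x j l := by
        rw [← Finset.sum_sub_distrib]
        apply Finset.sum_congr rfl
        intro l _
        simp [Pi.sub_apply]; ring
      rw [this, htdef] at *
      simp only [htdef] at hij
      rw [hij] at this ⊢
      simp [this]
    set Y : ℝ → ℝ := fun r => y (Function.invFun t r) with hY
    obtain ⟨m, hm, a, b, c, h⟩ := relu1d Y (Finset.univ.image t)
    refine ⟨m, le_trans hm (le_trans Finset.card_image_le (by simp)), a, fun _ => v, b, c, ?_⟩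
    intro i
    have hmem : t i ∈ Finset.univ.image t := Finset.mem_image.mpr ⟨i, Finset.mem_univ i, rfl⟩
    have := h (t i) hmem
    rw [hY] at this
    simp only at this
    rw [Function.leftInverse_invFun ht i] at this
    exact this
end

section
/- Let X be an n×p data matrix with rows x_i, and let the reconstruction map be x -> W2 W1 x for matrices W1 in R^{r×p}, W2 in R^{p×r} with r < p. The minimum over W1, W2 of sum_i ||x_i - W2 W1 x_i||^2 equals the minimum over rank-at-most-r matrices M of sum_i ||x_i - M x_i||^2, and is attained when W2 W1 is the orthogonal projection onto the span of the top r eigenvectors of X^T X. (Linear autoencoders recover the principal subspace.) -/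
open Matrix Finset

lemma lae_sum_ite_lt {p r : ℕ} (hrp : r ≤ p) (f : Fin p → ℝ) :
    ∑ a : Fin p, (if (a : ℕ) < r then f a else 0)
      = ∑ k : Fin r, f (Fin.castLE hrp k) := by
  classical
  set g : ℕ → ℝ := fun i => if h : i < p then (if i < r then f ⟨i, h⟩ else 0) else 0 with hg
  have h1 : ∑ a : Fin p, (if (a : ℕ) < r then f a else 0) = ∑ a : Fin p, g (a : ℕ) := by
    refine Finset.sum_congr rfl fun a _ => ?_
    simp [hg, a.isLt]
  have h2 : ∑ k : Fin r, f (Fin.castLE hrp k) = ∑ k : Fin r, g (k : ℕ) := by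
    refine Finset.sum_congr rfl fun k _ => ?_
    have hkp : (k : ℕ) < p := lt_of_lt_of_le k.isLt hrp
    simp only [hg, hkp, k.isLt, dif_pos, if_pos]
    rfl
  rw [h1, h2, Fin.sum_univ_eq_sum_range g p, Fin.sum_univ_eq_sum_range g r]
  rw [← Finset.sum_filter_add_sum_filter_not (Finset.range p) (fun i => i < r)]
  have hfil : (Finset.range p).filter (fun i => i < r) = Finset.range r := by
    ext i; simp; omega
  have hzero : ∑ i ∈ (Finset.range p).filter (fun i => ¬ i < r), g i = 0 := by
    refine Finset.sum_eq_zero fun i hi => ?_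
    simp only [Finset.mem_filter, Finset.mem_range] at hi
    simp [hg, hi.1, hi.2]
  rw [hfil, hzero, add_zero]

lemma lae_sum_comm4 {n m k l : ℕ} (F : Fin n → Fin m → Fin k → Fin l → ℝ) :
    ∑ i, ∑ j, ∑ a, ∑ b, F i j a b = ∑ a, ∑ b, ∑ j, ∑ i, F i j a b := by
  calc ∑ i, ∑ j, ∑ a, ∑ b, F i j a b
      = ∑ i, ∑ a, ∑ j, ∑ b, F i j a b :=
        Finset.sum_congr rfl fun i _ => Finset.sum_comm
    _ = ∑ a, ∑ i, ∑ j, ∑ b, F i j a b := Finset.sum_comm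
    _ = ∑ a, ∑ i, ∑ b, ∑ j, F i j a b :=
        Finset.sum_congr rfl fun a _ => Finset.sum_congr rfl fun i _ => Finset.sum_comm
    _ = ∑ a, ∑ b, ∑ i, ∑ j, F i j a b :=
        Finset.sum_congr rfl fun a _ => Finset.sum_comm
    _ = ∑ a, ∑ b, ∑ j, ∑ i, F i j a b :=
        Finset.sum_congr rfl fun a _ => Finset.sum_congr rfl fun b _ => Finset.sum_comm

-- squared-distance expansion against an orthonormal family
lemma lae_expand_dist {p d : ℕ} (w : Fin d → Fin p → ℝ)
    (hw : ∀ a b, ∑ l, w a l * w b l = if a = b then 1 else 0)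
    (u : Fin p → ℝ) (dv : Fin d → ℝ) :
    ∑ j, (u j - ∑ k, dv k * w k j) ^ 2
      = ∑ l, u l * u l - 2 * (∑ k, dv k * (∑ l, w k l * u l)) + ∑ k, (dv k) ^ 2 := by
  classical
  have expand : ∀ j : Fin p, (u j - ∑ k, dv k * w k j) ^ 2
      = u j * u j - 2 * (∑ k, dv k * (w k j * u j))
        + ∑ k, ∑ k', (dv k * dv k') * (w k j * w k' j) := by
    intro j
    have h1 : (∑ k, dv k * w k j) * u j = ∑ k, dv k * (w k j * u j) := by
      rw [Finset.sum_mul]; exact Finset.sum_congr rfl fun k _ => by ring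
    have h2 : (∑ k, dv k * w k j) * (∑ k', dv k' * w k' j)
        = ∑ k, ∑ k', (dv k * dv k') * (w k j * w k' j) := by
      rw [Finset.sum_mul_sum]
      exact Finset.sum_congr rfl fun k _ => Finset.sum_congr rfl fun k' _ => by ring
    have : (u j - ∑ k, dv k * w k j) ^ 2
        = u j * u j - 2 * ((∑ k, dv k * w k j) * u j)
          + (∑ k, dv k * w k j) * (∑ k', dv k' * w k' j) := by ring
    rw [this, h1, h2]
  rw [Finset.sum_congr rfl fun j _ => expand j]
  rw [Finset.sum_add_distrib, Finset.sum_sub_distrib]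
  congr 1
  · congr 1
    rw [← Finset.mul_sum]
    congr 1
    rw [Finset.sum_comm]
    refine Finset.sum_congr rfl fun k _ => ?_
    rw [← Finset.mul_sum]
  · rw [Finset.sum_comm]
    refine Finset.sum_congr rfl fun k _ => ?_
    rw [Finset.sum_comm (γ := Fin p)]
    have : ∀ k' : Fin d, ∑ j, (dv k * dv k') * (w k j * w k' j)
        = (dv k * dv k') * ∑ j, w k j * w k' j := by
      intro k'; rw [Finset.mul_sum]
    rw [Finset.sum_congr rfl fun k' _ => this k']
    simp only [hw]
    simp [Finset.sum_ite_eq', sq]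

-- Parseval w.r.t. a complete orthonormal system `v`
lemma lae_parseval {p : ℕ} (v : Fin p → Fin p → ℝ)
    (hvc : ∀ l l' : Fin p, ∑ a, v a l * v a l' = if l = l' then 1 else 0)
    (u : Fin p → ℝ) :
    ∑ a, (∑ l, u l * v a l) ^ 2 = ∑ l, u l * u l := by
  classical
  have h1 : ∀ a : Fin p, (∑ l, u l * v a l) ^ 2
      = ∑ l, ∑ l', (u l * u l') * (v a l * v a l') := by
    intro a
    rw [sq, Finset.sum_mul_sum]
    exact Finset.sum_congr rfl fun l _ => Finset.sum_congr rfl fun l' _ => by ring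
  rw [Finset.sum_congr rfl fun a _ => h1 a]
  rw [Finset.sum_comm]
  refine Eq.trans (Finset.sum_congr rfl fun l _ => ?_) rfl
  rw [Finset.sum_comm]
  have h2 : ∀ l' : Fin p, ∑ a, (u l * u l') * (v a l * v a l')
      = (u l * u l') * (if l = l' then 1 else 0) := by
    intro l'; rw [← Finset.mul_sum, hvc]
  rw [Finset.sum_congr rfl fun l' _ => h2 l']
  simp [Finset.sum_ite_eq]

lemma lae_sum_sq_sub {d : ℕ} (a b : Fin d → ℝ) :
    ∑ k, (a k - b k) ^ 2 = ∑ k, a k ^ 2 - 2 * ∑ k, a k * b k + ∑ k, b k ^ 2 := by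
  have : ∀ k : Fin d, (a k - b k) ^ 2 = a k ^ 2 - 2 * (a k * b k) + b k ^ 2 := by
    intro k; ring
  rw [Finset.sum_congr rfl fun k _ => this k, Finset.sum_add_distrib, Finset.sum_sub_distrib,
    ← Finset.mul_sum]

-- Bessel inequality
lemma lae_bessel {p d : ℕ} (w : Fin d → Fin p → ℝ)
    (hw : ∀ a b, ∑ l, w a l * w b l = if a = b then 1 else 0)
    (u : Fin p → ℝ) :
    ∑ k, (∑ l, w k l * u l) ^ 2 ≤ ∑ l, u l * u l := by
  set t : Fin d → ℝ := fun k => ∑ l, w k l * u l with ht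
  have h0 : (0:ℝ) ≤ ∑ j, (u j - ∑ k, t k * w k j) ^ 2 :=
    Finset.sum_nonneg fun j _ => sq_nonneg _
  rw [lae_expand_dist w hw u t] at h0
  have htt : ∑ k, t k * t k = ∑ k, t k ^ 2 :=
    Finset.sum_congr rfl fun k _ => (sq (t k)).symm
  -- h0 : 0 ≤ ∑ u*u - 2 * ∑ t k * t k + ∑ t k ^2
  have : ∑ k, t k * (∑ l, w k l * u l) = ∑ k, t k ^ 2 := by
    rw [← htt]
  rw [this] at h0
  linarith

-- distance to a point of the span is at least the projection defect
lemma lae_proj_bound {p d : ℕ} (w : Fin d → Fin p → ℝ)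
    (hw : ∀ a b, ∑ l, w a l * w b l = if a = b then 1 else 0)
    (u : Fin p → ℝ) (hu : ∑ l, u l * u l = 1) (dv : Fin d → ℝ) :
    1 - ∑ k, (∑ l, w k l * u l) ^ 2 ≤ ∑ j, (u j - ∑ k, dv k * w k j) ^ 2 := by
  set t : Fin d → ℝ := fun k => ∑ l, w k l * u l with ht
  rw [lae_expand_dist w hw u dv, hu]
  have h0 : (0:ℝ) ≤ ∑ k, (dv k - t k) ^ 2 := Finset.sum_nonneg fun k _ => sq_nonneg _
  rw [lae_sum_sq_sub] at h0
  have : ∑ k, dv k * (∑ l, w k l * u l) = ∑ k, dv k * t k := rfl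
  rw [this]
  linarith
-- key rearrangement inequality
lemma lae_key_ineq {p r : ℕ} (hr : r < p) (μ c : Fin p → ℝ)
    (hμ : Antitone μ) (hμ0 : ∀ a, 0 ≤ μ a)
    (hc0 : ∀ a, 0 ≤ c a) (hc1 : ∀ a, c a ≤ 1) (hcs : ∑ a, c a ≤ (r : ℝ)) :
    ∑ a : Fin p, (if (a : ℕ) < r then 0 else μ a) ≤ ∑ a, μ a * (1 - c a) := by
  classical
  set t : ℝ := μ ⟨r, hr⟩ with htdef
  have ht0 : 0 ≤ t := hμ0 _
  have hpt : ∀ a : Fin p, μ a * c a - t * c a ≤ (if (a : ℕ) < r then μ a - t else 0) := by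
    intro a
    by_cases h : (a : ℕ) < r
    · have hta : t ≤ μ a := by
        refine hμ ?_
        rw [Fin.le_def]
        simpa using le_of_lt h
      rw [if_pos h]
      nlinarith [hc1 a, hc0 a]
    · have hta : μ a ≤ t := by
        refine hμ ?_
        rw [Fin.le_def]
        simpa using le_of_not_gt h
      rw [if_neg h]
      nlinarith [hc0 a]
  have hsum := Finset.sum_le_sum (fun a (_ : a ∈ Finset.univ) => hpt a)
  rw [Finset.sum_sub_distrib, ← Finset.mul_sum] at hsum
  -- ∑ ite (μ a - t) 0 = ∑ ite (μ a) 0 - r * t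
  have hsplit : ∑ a : Fin p, (if (a : ℕ) < r then μ a - t else 0)
      = (∑ a : Fin p, if (a : ℕ) < r then μ a else 0) - (r : ℝ) * t := by
    rw [lae_sum_ite_lt hr.le (fun a => μ a - t), lae_sum_ite_lt hr.le (fun a => μ a),
      Finset.sum_sub_distrib]
    simp [Finset.sum_const, Finset.card_univ, nsmul_eq_mul]
  rw [hsplit] at hsum
  have hmc : ∑ a, μ a * c a ≤ ∑ a : Fin p, (if (a : ℕ) < r then μ a else 0) := by
    have h2 : t * ∑ a, c a ≤ t * r := by
      exact mul_le_mul_of_nonneg_left hcs ht0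
    linarith
  have hmu : ∑ a, μ a * (1 - c a) = ∑ a, μ a - ∑ a, μ a * c a := by
    rw [← Finset.sum_sub_distrib]
    exact Finset.sum_congr rfl fun a _ => by ring
  have hμsplit : ∑ a : Fin p, μ a
      = (∑ a : Fin p, if (a : ℕ) < r then μ a else 0)
        + ∑ a : Fin p, (if (a : ℕ) < r then 0 else μ a) := by
    rw [← Finset.sum_add_distrib]
    refine Finset.sum_congr rfl fun a _ => ?_
    by_cases h : (a : ℕ) < r <;> simp [h]
  rw [hmu, hμsplit]
  linarith
-- the reconstruction error in spectral form
lemma lae_error_eq {n p : ℕ} (X : Matrix (Fin n) (Fin p) ℝ)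
    (v : Fin p → Fin p → ℝ) (μ : Fin p → ℝ)
    (hvc : ∀ l l' : Fin p, ∑ a, v a l * v a l' = if l = l' then 1 else 0)
    (hve : ∀ a, (Xᵀ * X) *ᵥ (v a) = μ a • v a)
    (M : Matrix (Fin p) (Fin p) ℝ) :
    ∑ i : Fin n, ∑ j : Fin p, (X i j - ∑ l : Fin p, M j l * X i l) ^ 2
      = ∑ a : Fin p, μ a * ∑ j : Fin p, (v a j - (M *ᵥ (v a)) j) ^ 2 := by
  classical
  set B : Fin p → Fin p → ℝ := fun j l => (if j = l then 1 else 0) - M j l with hBdef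
  have hB : ∀ (u : Fin p → ℝ) (j : Fin p), u j - ∑ l, M j l * u l = ∑ l, B j l * u l := by
    intro u j
    simp only [hBdef, sub_mul, ite_mul, one_mul, zero_mul]
    rw [Finset.sum_sub_distrib, Finset.sum_ite_eq]
    simp
  -- spectral identity for the Gram matrix
  have hG : ∀ l l' : Fin p, ∑ a, μ a * (v a l * v a l') = ∑ i, X i l * X i l' := by
    intro l l'
    have hAe : ∀ k : Fin p, (Xᵀ * X) l k = ∑ i, X i l * X i k := by
      intro k; simp [Matrix.mul_apply, Matrix.transpose_apply]
    have h1 : ∀ a : Fin p, μ a * v a l = ∑ k, (Xᵀ * X) l k * v a k := by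
      intro a
      have := congrFun (hve a) l
      simp only [Matrix.mulVec, dotProduct, Pi.smul_apply, smul_eq_mul] at this
      exact this.symm
    calc ∑ a, μ a * (v a l * v a l')
        = ∑ a, (∑ k, (Xᵀ * X) l k * v a k) * v a l' := by
          refine Finset.sum_congr rfl fun a _ => ?_
          rw [← mul_assoc, h1 a]
      _ = ∑ a, ∑ k, ((Xᵀ * X) l k) * (v a k * v a l') := by
          refine Finset.sum_congr rfl fun a _ => ?_
          rw [Finset.sum_mul]
          exact Finset.sum_congr rfl fun k _ => by ring
      _ = ∑ k, ((Xᵀ * X) l k) * ∑ a, (v a k * v a l') := by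
          rw [Finset.sum_comm]
          exact Finset.sum_congr rfl fun k _ => by rw [← Finset.mul_sum]
      _ = ∑ k, ((Xᵀ * X) l k) * (if k = l' then 1 else 0) := by
          refine Finset.sum_congr rfl fun k _ => by rw [hvc]
      _ = (Xᵀ * X) l l' := by simp [Finset.sum_ite_eq']
      _ = ∑ i, X i l * X i l' := hAe l'
  calc ∑ i : Fin n, ∑ j : Fin p, (X i j - ∑ l, M j l * X i l) ^ 2
      = ∑ i : Fin n, ∑ j : Fin p, (∑ l, B j l * X i l) ^ 2 := by
        refine Finset.sum_congr rfl fun i _ => Finset.sum_congr rfl fun j _ => ?_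
        rw [hB (fun l => X i l) j]
    _ = ∑ i : Fin n, ∑ j : Fin p, ∑ l, ∑ l', (B j l * B j l') * (X i l * X i l') := by
        refine Finset.sum_congr rfl fun i _ => Finset.sum_congr rfl fun j _ => ?_
        rw [sq, Finset.sum_mul_sum]
        exact Finset.sum_congr rfl fun l _ => Finset.sum_congr rfl fun l' _ => by ring
    _ = ∑ l, ∑ l', ∑ j, ∑ i, (B j l * B j l') * (X i l * X i l') := lae_sum_comm4 _
    _ = ∑ l, ∑ l', (∑ j, B j l * B j l') * (∑ i, X i l * X i l') := by
        refine Finset.sum_congr rfl fun l _ => Finset.sum_congr rfl fun l' _ => ?_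
        rw [Finset.sum_mul_sum]
    _ = ∑ l, ∑ l', (∑ j, B j l * B j l') * (∑ a, μ a * (v a l * v a l')) := by
        refine Finset.sum_congr rfl fun l _ => Finset.sum_congr rfl fun l' _ => by rw [hG]
    _ = ∑ a, ∑ j, ∑ l, ∑ l', μ a * ((B j l * B j l') * (v a l * v a l')) := by
        conv_rhs => rw [lae_sum_comm4 (fun a j l l' => μ a * ((B j l * B j l') * (v a l * v a l')))]
        refine Finset.sum_congr rfl fun l _ => Finset.sum_congr rfl fun l' _ => ?_
        rw [Finset.sum_mul_sum]
        refine Finset.sum_congr rfl fun j _ => ?_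
        exact Finset.sum_congr rfl fun a _ => by ring
    _ = ∑ a, μ a * ∑ j, (∑ l, B j l * v a l) ^ 2 := by
        refine Finset.sum_congr rfl fun a _ => ?_
        rw [Finset.mul_sum]
        refine Finset.sum_congr rfl fun j _ => ?_
        rw [sq, Finset.sum_mul_sum, Finset.mul_sum]
        refine Finset.sum_congr rfl fun l _ => ?_
        rw [Finset.mul_sum]
        exact Finset.sum_congr rfl fun l' _ => by ring
    _ = ∑ a : Fin p, μ a * ∑ j : Fin p, (v a j - (M *ᵥ (v a)) j) ^ 2 := by
        refine Finset.sum_congr rfl fun a _ => ?_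
        congr 1
        refine Finset.sum_congr rfl fun j _ => ?_
        congr 1
        rw [← hB (v a) j]
        rfl

/-- Linear autoencoders recover the principal subspace: the minimum of the
reconstruction error over factorizations `W2 * W1` equals the minimum over
rank-at-most-`r` matrices, and both are attained at the orthogonal projection
onto the span of the top `r` eigenvectors of `Xᵀ X`. -/
theorem linear_autoencoder_pca
    (n p r : ℕ) (hr : r < p) (X : Matrix (Fin n) (Fin p) ℝ) :
    ∃ (v : Fin p → (Fin p → ℝ)) (μ : Fin p → ℝ),
      -- `v` is an orthonormal family of eigenvectors of `Xᵀ X`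
      (∀ a b : Fin p, ∑ l, v a l * v b l = if a = b then 1 else 0) ∧
      (∀ a : Fin p, (Xᵀ * X).mulVec (v a) = μ a • v a) ∧
      -- eigenvalues are sorted in decreasing order
      Antitone μ ∧
      -- `P` is the orthogonal projection onto the span of the top `r` eigenvectors
      ∀ P : Matrix (Fin p) (Fin p) ℝ,
        P = (fun a b => ∑ j : Fin p, if (j : ℕ) < r then v j a * v j b else 0) →
        IsLeast
          {c : ℝ | ∃ (W1 : Matrix (Fin r) (Fin p) ℝ)
              (W2 : Matrix (Fin p) (Fin r) ℝ),
            c = ∑ i : Fin n, ∑ j : Fin p,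
              (X i j - ∑ l : Fin p, (W2 * W1) j l * X i l) ^ 2}
          (∑ i : Fin n, ∑ j : Fin p,
            (X i j - ∑ l : Fin p, P j l * X i l) ^ 2) ∧
        IsLeast
          {c : ℝ | ∃ M : Matrix (Fin p) (Fin p) ℝ, M.rank ≤ r ∧
            c = ∑ i : Fin n, ∑ j : Fin p,
              (X i j - ∑ l : Fin p, M j l * X i l) ^ 2}
          (∑ i : Fin n, ∑ j : Fin p,
            (X i j - ∑ l : Fin p, P j l * X i l) ^ 2) := by
  classical
  have hPSD : (Xᵀ * X).PosSemidef := by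
    rw [← Matrix.conjTranspose_eq_transpose_of_trivial]
    exact Matrix.posSemidef_conjTranspose_mul_self X
  have hH : (Xᵀ * X).IsHermitian := hPSD.1
  set σ : Equiv.Perm (Fin p) := Tuple.sort (fun i => -hH.eigenvalues i) with hσdef
  set v : Fin p → Fin p → ℝ := fun a => ⇑(hH.eigenvectorBasis (σ a)) with hvdef
  set μ : Fin p → ℝ := fun a => hH.eigenvalues (σ a) with hμdef
  -- orthonormality
  have hvo : ∀ a b : Fin p, ∑ l, v a l * v b l = if a = b then 1 else 0 := by
    have horth := hH.eigenvectorBasis.orthonormal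
    rw [orthonormal_iff_ite] at horth
    intro a b
    have h := horth (σ a) (σ b)
    rw [PiLp.inner_apply] at h
    simp only [RCLike.inner_apply, conj_trivial] at h
    rw [hvdef]
    simpa [σ.injective.eq_iff, mul_comm] using h
  -- eigen equations
  have hve : ∀ a : Fin p, (Xᵀ * X) *ᵥ (v a) = μ a • v a := by
    intro a
    exact hH.mulVec_eigenvectorBasis (σ a)
  -- antitone
  have hant : Antitone μ := by
    intro a b hab
    have := Tuple.monotone_sort (fun i => -hH.eigenvalues i) hab
    simp only [Function.comp_apply] at this
    rw [hμdef]
    dsimp only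
    rw [← hσdef] at this
    linarith
  -- nonneg eigenvalues
  have hμ0 : ∀ a : Fin p, 0 ≤ μ a := fun a => hPSD.eigenvalues_nonneg (σ a)
  -- completeness
  have hvc : ∀ l l' : Fin p, ∑ a, v a l * v a l' = if l = l' then 1 else 0 := by
    have hVVt : (Matrix.of v) * (Matrix.of v)ᵀ = (1 : Matrix (Fin p) (Fin p) ℝ) := by
      ext a b
      simp [Matrix.mul_apply, Matrix.one_apply, hvo a b]
    have hVtV := mul_eq_one_comm.mp hVVt
    intro l l'
    have h := congrFun (congrFun hVtV l) l'
    simpa [Matrix.mul_apply, Matrix.one_apply] using h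
  refine ⟨v, μ, hvo, hve, hant, ?_⟩
  intro P hP
  -- action of P on the eigenvectors
  have hPv : ∀ (a : Fin p) (j : Fin p),
      (P *ᵥ v a) j = if (a : ℕ) < r then v a j else 0 := by
    intro a j
    rw [hP]
    show ∑ l, (∑ j' : Fin p, if (j' : ℕ) < r then v j' j * v j' l else 0) * v a l = _
    calc ∑ l, (∑ j' : Fin p, if (j' : ℕ) < r then v j' j * v j' l else 0) * v a l
        = ∑ l, ∑ j' : Fin p, (if (j' : ℕ) < r then (v j' j) * (v j' l * v a l) else 0) := by
          refine Finset.sum_congr rfl fun l _ => ?_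
          rw [Finset.sum_mul]
          refine Finset.sum_congr rfl fun j' _ => ?_
          by_cases h : (j' : ℕ) < r <;> simp [h] <;> ring
      _ = ∑ j' : Fin p, (if (j' : ℕ) < r then (v j' j) * ∑ l, v j' l * v a l else 0) := by
          rw [Finset.sum_comm]
          refine Finset.sum_congr rfl fun j' _ => ?_
          by_cases h : (j' : ℕ) < r
          · simp only [if_pos h]
            rw [Finset.mul_sum]
          · simp [h]
      _ = ∑ j' : Fin p, (if (j' : ℕ) < r then (v j' j) * (if j' = a then 1 else 0) else 0) := by
          refine Finset.sum_congr rfl fun j' _ => ?_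
          rw [hvo j' a]
      _ = if (a : ℕ) < r then v a j else 0 := by
          rw [Finset.sum_eq_single a]
          · by_cases h : (a : ℕ) < r <;> simp [h]
          · intro b _ hba
            by_cases h : (b : ℕ) < r <;> simp [h, hba]
          · simp
  -- value at P
  have hvalP : ∑ i : Fin n, ∑ j : Fin p, (X i j - ∑ l : Fin p, P j l * X i l) ^ 2
      = ∑ a : Fin p, (if (a : ℕ) < r then 0 else μ a) := by
    rw [lae_error_eq X v μ hvc hve P]
    refine Finset.sum_congr rfl fun a _ => ?_
    by_cases h : (a : ℕ) < r
    · simp only [if_pos h]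
      have : ∀ j : Fin p, (v a j - (P *ᵥ v a) j) ^ 2 = 0 := by
        intro j; rw [hPv a j, if_pos h]; ring
      rw [Finset.sum_congr rfl fun j _ => this j]
      simp
    · simp only [if_neg h]
      have : ∀ j : Fin p, (v a j - (P *ᵥ v a) j) ^ 2 = v a j * v a j := by
        intro j; rw [hPv a j, if_neg h]; ring
      rw [Finset.sum_congr rfl fun j _ => this j, hvo a a]
      simp
  -- factorization of P
  set W1 : Matrix (Fin r) (Fin p) ℝ := Matrix.of (fun k l => v (Fin.castLE hr.le k) l) with hW1
  set W2 : Matrix (Fin p) (Fin r) ℝ := Matrix.of (fun j k => v (Fin.castLE hr.le k) j) with hW2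
  have hfac : W2 * W1 = P := by
    ext j l
    rw [hP]
    show ∑ k : Fin r, v (Fin.castLE hr.le k) j * v (Fin.castLE hr.le k) l = _
    exact (lae_sum_ite_lt hr.le (fun j' => v j' j * v j' l)).symm
  have hrankP : P.rank ≤ r := by
    rw [← hfac]
    refine le_trans (Matrix.rank_mul_le_right W2 W1) ?_
    exact le_trans W1.rank_le_card_height (by simp)
  -- the lower bound for all rank ≤ r matrices
  have hLB : ∀ M : Matrix (Fin p) (Fin p) ℝ, M.rank ≤ r →
      (∑ a : Fin p, if (a : ℕ) < r then 0 else μ a)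
        ≤ ∑ i : Fin n, ∑ j : Fin p, (X i j - ∑ l : Fin p, M j l * X i l) ^ 2 := by
    intro M hMr
    rw [lae_error_eq X v μ hvc hve M]
    set e : (Fin p → ℝ) ≃ₗ[ℝ] EuclideanSpace ℝ (Fin p) :=
      (WithLp.linearEquiv 2 ℝ (Fin p → ℝ)).symm with hedef
    set S : Submodule ℝ (EuclideanSpace ℝ (Fin p)) :=
      (Submodule.span ℝ (Set.range Mᵀ)).map (e : (Fin p → ℝ) →ₗ[ℝ] EuclideanSpace ℝ (Fin p)) with hSdef
    have hdim : Module.finrank ℝ S ≤ r := by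
      have h1 := LinearEquiv.finrank_map_eq (R := ℝ) e (Submodule.span ℝ (Set.range Mᵀ))
      rw [show Set.range Mᵀ = Set.range M.col from rfl, ← Matrix.rank_eq_finrank_span_cols] at h1
      exact le_trans (le_of_eq h1) hMr
    set d := Module.finrank ℝ S with hd
    set ob := stdOrthonormalBasis ℝ S with hob
    set w : Fin d → Fin p → ℝ := fun k => ⇑((ob k : EuclideanSpace ℝ (Fin p))) with hwdef
    have hwo : ∀ a b : Fin d, ∑ l, w a l * w b l = if a = b then 1 else 0 := by
      have horth := ob.orthonormal
      rw [orthonormal_iff_ite] at horth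
      intro a b
      have h := horth a b
      rw [Submodule.coe_inner, PiLp.inner_apply] at h
      simp only [RCLike.inner_apply, conj_trivial] at h
      refine Eq.trans (Finset.sum_congr rfl fun l _ => mul_comm _ _) ?_
      simpa using h
    have hrep : ∀ a : Fin p, ∃ dv : Fin d → ℝ,
        ∀ j, (M *ᵥ v a) j = ∑ k, dv k * w k j := by
      intro a
      set s : Fin p → ℝ := M *ᵥ v a with hs
      have hmem0 : s ∈ Submodule.span ℝ (Set.range Mᵀ) := by
        have hsum : s = ∑ l, v a l • Mᵀ l := by
          ext j
          simp [hs, Matrix.mulVec, dotProduct, Matrix.transpose_apply,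
            Finset.sum_apply, mul_comm]
        rw [hsum]
        exact Submodule.sum_mem _ fun l _ =>
          Submodule.smul_mem _ _ (Submodule.subset_span ⟨l, rfl⟩)
      have hmem : e s ∈ S := Submodule.mem_map_of_mem hmem0
      set y : S := ⟨e s, hmem⟩ with hy
      refine ⟨fun k => ob.repr y k, fun j => ?_⟩
      have hyr := ob.sum_repr y
      have hyc : (e s : EuclideanSpace ℝ (Fin p))
          = ∑ k, ob.repr y k • (ob k : EuclideanSpace ℝ (Fin p)) := by
        conv_lhs => rw [show (e s) = (y : EuclideanSpace ℝ (Fin p)) from rfl, ← hyr]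
        simp
      have h2 := congrArg (WithLp.linearEquiv 2 ℝ (Fin p → ℝ)) hyc
      rw [map_sum] at h2
      have h3 : (WithLp.linearEquiv 2 ℝ (Fin p → ℝ)) (e s) = s := by
        simp [hedef]
      rw [h3] at h2
      have h4 := congrFun h2 j
      rw [Finset.sum_apply] at h4
      rw [h4]
      refine Finset.sum_congr rfl fun k _ => ?_
      rw [_root_.map_smul]
      rfl
    set c : Fin p → ℝ := fun a => ∑ k, (∑ l, w k l * v a l) ^ 2 with hcdef
    have hc0 : ∀ a, 0 ≤ c a := fun a => Finset.sum_nonneg fun k _ => sq_nonneg _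
    have hva1 : ∀ a : Fin p, ∑ l, v a l * v a l = 1 := by
      intro a; rw [hvo a a]; simp
    have hc1 : ∀ a, c a ≤ 1 := by
      intro a
      calc c a ≤ ∑ l, v a l * v a l := lae_bessel w hwo (v a)
        _ = 1 := hva1 a
    have hcsum : ∑ a, c a ≤ (r : ℝ) := by
      have h1 : ∑ a, c a = ∑ k : Fin d, ∑ a : Fin p, (∑ l, w k l * v a l) ^ 2 := by
        rw [hcdef]
        exact Finset.sum_comm
      have h2 : ∀ k : Fin d, ∑ a : Fin p, (∑ l, w k l * v a l) ^ 2 = 1 := by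
        intro k
        rw [lae_parseval v hvc (w k)]
        rw [hwo k k]
        simp
      rw [h1, Finset.sum_congr rfl fun k _ => h2 k]
      simp only [Finset.sum_const, Finset.card_univ, Fintype.card_fin, nsmul_eq_mul, mul_one]
      exact_mod_cast hdim
    calc ∑ a : Fin p, (if (a : ℕ) < r then 0 else μ a)
        ≤ ∑ a, μ a * (1 - c a) := lae_key_ineq hr μ c hant hμ0 hc0 hc1 hcsum
      _ ≤ ∑ a : Fin p, μ a * ∑ j : Fin p, (v a j - (M *ᵥ (v a)) j) ^ 2 := by
          refine Finset.sum_le_sum fun a _ => ?_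
          refine mul_le_mul_of_nonneg_left ?_ (hμ0 a)
          obtain ⟨dv, hdv⟩ := hrep a
          have := lae_proj_bound w hwo (v a) (hva1 a) dv
          calc 1 - c a = 1 - ∑ k, (∑ l, w k l * v a l) ^ 2 := rfl
            _ ≤ ∑ j, (v a j - ∑ k, dv k * w k j) ^ 2 := this
            _ = ∑ j, (v a j - (M *ᵥ v a) j) ^ 2 := by
                refine Finset.sum_congr rfl fun j _ => ?_
                rw [hdv j]
  constructor
  · constructor
    · exact ⟨W1, W2, by rw [hfac]⟩
    · rintro cval ⟨W1', W2', rfl⟩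
      rw [hvalP]
      refine hLB (W2' * W1') ?_
      refine le_trans (Matrix.rank_mul_le_right W2' W1') ?_
      exact le_trans W1'.rank_le_card_height (by simp)
  · constructor
    · exact ⟨P, hrankP, rfl⟩
    · rintro cval ⟨M, hMr, rfl⟩
      rw [hvalP]
      exact hLB M hMr
end
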